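/- The map Ψ is a bijection from the set D_n of Dyck words of semilength n to itself, for every n ≥ 0. -/

import Mathlib

attribute [local instance] Classical.propDecidable

namespace DyckBij

/-- A word over `Bool` (`true` = up-step `u`, `false` = down-step `d`) is a Dyck word:
equally many `u`'s and `d`'s, and every prefix has at least as many `u`'s as `d`'s. -/
def IsDyck (w : List Bool) : Prop :=
  w.count false = w.count true ∧
    ∀ p : List Bool, p <+: w → p.count false ≤ p.count true

/-- `Matched w i j`: the `u` at (0-indexed) position `i` of `w` is matched (as in matched
parentheses) with the `d` at position `j`, i.e. `w = A u B d C` with `B` a Dyck word,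
`|A| = i` and `j = i + |B| + 1`. -/
def Matched (w : List Bool) (i j : ℕ) : Prop :=
  ∃ A B C : List Bool, IsDyck B ∧ w = A ++ true :: (B ++ false :: C) ∧
    A.length = i ∧ j = i + B.length + 1

/-- Positions `i` and `j` form a matched pair of steps of `w`. -/
def MatchPair (w : List Bool) (i j : ℕ) : Prop :=
  Matched w i j ∨ Matched w j i

/-- The 0-indexed reading order `σ^{(r)}` on a word of length `L`: the first `2r` positions
are read in order, and the remaining positions are read in zigzag
`2r, L-1, 2r+1, L-2, …` (0-indexed). For `r = 0` this is the zigzag order `σ`. -/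
def zigR (r L p : ℕ) : ℕ :=
  if p < 2 * r then p
  else if p % 2 = 0 then p / 2 + r
  else L + r - (p + 1) / 2

/-- The bijection `Ψ_r`: the `p`-th letter of `Ψ_r(w)` is `u` iff the match of the
`σ^{(r)}_p`-th step of `w` does not occur among the previously read steps
`σ^{(r)}_0, …, σ^{(r)}_{p-1}`. -/
noncomputable def psiR (r : ℕ) (w : List Bool) : List Bool :=
  List.ofFn fun p : Fin w.length =>
    if ∃ p' : ℕ, p' < (p : ℕ) ∧
        MatchPair w (zigR r w.length p') (zigR r w.length (p : ℕ))
    then false else true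

/-- The bijection `Ψ = Ψ_0`. -/
noncomputable def psi : List Bool → List Bool := psiR 0

/-- Number of tunnels of `w` with `|A| = |C| + 2r` (midpoint at `x = n + r`),
i.e. decompositions `w = A u B d C` with `B` a Dyck word; tunnels are indexed by `|A|`. -/
noncomputable def tunEq (r : ℕ) (w : List Bool) : ℕ :=
  {i : ℕ | ∃ A B C : List Bool, IsDyck B ∧ w = A ++ true :: (B ++ false :: C) ∧
    A.length = i ∧ A.length = C.length + 2 * r}.ncard

/-- Number of tunnels of `w` with `|A| > |C| + 2r` (midpoint in `x > n + r`). -/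
noncomputable def tunGt (r : ℕ) (w : List Bool) : ℕ :=
  {i : ℕ | ∃ A B C : List Bool, IsDyck B ∧ w = A ++ true :: (B ++ false :: C) ∧
    A.length = i ∧ C.length + 2 * r < A.length}.ncard

/-- Number of tunnels of `w` with `|A| ≤ |C| + 2r` (midpoint in `x ≤ n + r`). -/
noncomputable def tunLe (r : ℕ) (w : List Bool) : ℕ :=
  {i : ℕ | ∃ A B C : List Bool, IsDyck B ∧ w = A ++ true :: (B ++ false :: C) ∧
    A.length = i ∧ A.length ≤ C.length + 2 * r}.ncard

/-- Number of centered tunnels `ct(w)`. -/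
noncomputable def ctun (w : List Bool) : ℕ := tunEq 0 w

/-- Number of right tunnels `rt(w)`. -/
noncomputable def rtun (w : List Bool) : ℕ := tunGt 0 w

/-- Number of left tunnels `lt(w)`: tunnels with `|A| < |C|`. -/
noncomputable def ltun (w : List Bool) : ℕ :=
  {i : ℕ | ∃ A B C : List Bool, IsDyck B ∧ w = A ++ true :: (B ++ false :: C) ∧
    A.length = i ∧ A.length < C.length}.ncard

/-- Number of multitunnels of `w` with `|A| = |C| + 2r` (midpoint at `x = n + r`):
decompositions `w = A B C` with `B` a nonempty Dyck word, indexed by `(|A|, |B|)`. -/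
noncomputable def mtunEq (r : ℕ) (w : List Bool) : ℕ :=
  {q : ℕ × ℕ | ∃ A B C : List Bool, IsDyck B ∧ B ≠ [] ∧ w = A ++ B ++ C ∧
    A.length = q.1 ∧ B.length = q.2 ∧ A.length = C.length + 2 * r}.ncard

/-- Number of centered multitunnels `cmt(w)`. -/
noncomputable def cmtun (w : List Bool) : ℕ := mtunEq 0 w

/-- Number of hills `h(w)`: decompositions `w = X u d Y` with `X, Y` Dyck words. -/
noncomputable def numHills (w : List Bool) : ℕ :=
  {i : ℕ | ∃ X Y : List Bool, IsDyck X ∧ IsDyck Y ∧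
    w = X ++ true :: false :: Y ∧ X.length = i}.ncard

/-- Number of hills of `w` lying in `x > 2r`, i.e. with `|X| ≥ 2r`. -/
noncomputable def numHillsAfter (r : ℕ) (w : List Bool) : ℕ :=
  {i : ℕ | ∃ X Y : List Bool, IsDyck X ∧ IsDyck Y ∧
    w = X ++ true :: false :: Y ∧ X.length = i ∧ 2 * r ≤ X.length}.ncard

/-- Number of arches (equivalently, returns) `ret(w)`: decompositions
`w = X (u B d) Y` with `X, B, Y` Dyck words. -/
noncomputable def numArches (w : List Bool) : ℕ :=
  {i : ℕ | ∃ X B Y : List Bool, IsDyck X ∧ IsDyck B ∧ IsDyck Y ∧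
    w = X ++ true :: (B ++ false :: Y) ∧ X.length = i}.ncard

/-- Number of arches of `w` lying in `x ≥ 2r`, i.e. with `|X| ≥ 2r`. -/
noncomputable def numArchesAfter (r : ℕ) (w : List Bool) : ℕ :=
  {i : ℕ | ∃ X B Y : List Bool, IsDyck X ∧ IsDyck B ∧ IsDyck Y ∧
    w = X ++ true :: (B ++ false :: Y) ∧ X.length = i ∧ 2 * r ≤ X.length}.ncard

/-- Number of odd rises `odr(w)`: `u`-steps at odd 1-indexed positions
(even 0-indexed positions). -/
noncomputable def oddRises (w : List Bool) : ℕ :=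
  {p : ℕ | p < w.length ∧ p % 2 = 0 ∧ w.getD p false = true}.ncard

/-- Number of even rises `er(w)`: `u`-steps at even 1-indexed positions
(odd 0-indexed positions). -/
noncomputable def evenRises (w : List Bool) : ℕ :=
  {p : ℕ | p < w.length ∧ p % 2 = 1 ∧ w.getD p false = true}.ncard

/-- Number of odd rises of `w` at 1-indexed positions `> 2r`. -/
noncomputable def oddRisesAfter (r : ℕ) (w : List Bool) : ℕ :=
  {p : ℕ | p < w.length ∧ p % 2 = 0 ∧ 2 * r ≤ p ∧ w.getD p false = true}.ncard

/-- Number of even rises of `w` at 1-indexed positions `> 2r`. -/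
noncomputable def evenRisesAfter (r : ℕ) (w : List Bool) : ℕ :=
  {p : ℕ | p < w.length ∧ p % 2 = 1 ∧ 2 * r ≤ p ∧ w.getD p false = true}.ncard

/-- Number of `u`-steps of `w` at 1-indexed positions `≤ 2r`. -/
noncomputable def upstepsBefore (r : ℕ) (w : List Bool) : ℕ :=
  {p : ℕ | p < w.length ∧ p < 2 * r ∧ w.getD p false = true}.ncard

/-- Number of peaks of `w`: occurrences of the factor `u d`. -/
noncomputable def numPeaks (w : List Bool) : ℕ :=
  {i : ℕ | i + 2 ≤ w.length ∧ w.getD i false = true ∧ w.getD (i + 1) true = false}.ncard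

/-- Number of occurrences in `w` of a factor of length 3 beginning with `u`
and ending with `d` (occurrences of `u⋆d`). -/
noncomputable def numUStarD (w : List Bool) : ℕ :=
  {i : ℕ | i + 3 ≤ w.length ∧ w.getD i false = true ∧ w.getD (i + 2) true = false}.ncard

/-- `ih(w)`: 1 if `w` begins with the factor `u d`, else 0. -/
noncomputable def initHill (w : List Bool) : ℕ :=
  if w.take 2 = [true, false] then 1 else 0

/-- `fh(w)`: 1 if `w = X u d` with `X` a Dyck word, else 0. -/
noncomputable def finHill (w : List Bool) : ℕ :=
  if ∃ X : List Bool, IsDyck X ∧ w = X ++ [true, false] then 1 else 0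

/-- `π` avoids the pattern 321. -/
def Avoids321 {n : ℕ} (π : Equiv.Perm (Fin n)) : Prop :=
  ¬ ∃ i j k : Fin n, i < j ∧ j < k ∧ π k < π j ∧ π j < π i

/-- `π` avoids the pattern 132. -/
def Avoids132 {n : ℕ} (π : Equiv.Perm (Fin n)) : Prop :=
  ¬ ∃ i j k : Fin n, i < j ∧ j < k ∧ π i < π k ∧ π k < π j

/-- Number of fixed points of `π`. -/
noncomputable def fixedPts {n : ℕ} (π : Equiv.Perm (Fin n)) : ℕ :=
  {i : Fin n | π i = i}.ncard

/-- Number of excedances of `π`. -/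
noncomputable def excedances {n : ℕ} (π : Equiv.Perm (Fin n)) : ℕ :=
  {i : Fin n | i < π i}.ncard

/-- Number of descents of `π`. -/
noncomputable def descents {n : ℕ} (π : Equiv.Perm (Fin n)) : ℕ :=
  {i : ℕ | ∃ (h1 : i < n) (h2 : i + 1 < n), π ⟨i + 1, h2⟩ < π ⟨i, h1⟩}.ncard

/-- `α_r(π) = #{i : π(i) = i + r}` (stated 0-indexed, equivalent to the 1-indexed version). -/
noncomputable def alphaStat {n : ℕ} (r : ℕ) (π : Equiv.Perm (Fin n)) : ℕ :=
  {i : Fin n | (π i : ℕ) = (i : ℕ) + r}.ncard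

/-- `β_r(π) = #{i : i > r, π(i) = i}` (for 1-indexed `i`; 0-indexed this is `r ≤ i`). -/
noncomputable def betaStat {n : ℕ} (r : ℕ) (π : Equiv.Perm (Fin n)) : ℕ :=
  {i : Fin n | r ≤ (i : ℕ) ∧ π i = i}.ncard


section DyckAux
open List

lemma cnt_len (l : List Bool) : l.count false + l.count true = l.length := by
  induction l with
  | nil => simp
  | cons a t ih => cases a <;> simp [List.count_cons] <;> omega

lemma IsDyck.length_even {w : List Bool} (h : IsDyck w) : Even w.length := by
  have h1 := h.1
  have := cnt_len w
  exact ⟨w.count true, by omega⟩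

lemma Matched.lt {w : List Bool} {i j : ℕ} (h : Matched w i j) : i < j := by
  obtain ⟨A, B, C, _, _, _, hj⟩ := h; omega

lemma Matched.lt_length {w : List Bool} {i j : ℕ} (h : Matched w i j) : j < w.length := by
  obtain ⟨A, B, C, _, hw, hA, hj⟩ := h
  subst hw; simp; omega

lemma Matched.fst_lt_length {w : List Bool} {i j : ℕ} (h : Matched w i j) : i < w.length :=
  lt_trans h.lt h.lt_length

lemma getD_append_cons {α : Type*} (A : List α) (x : α) (t : List α) (d : α) :
    (A ++ x :: t).getD A.length d = x := by
  simp [List.getD_eq_getElem?_getD, List.getElem?_append_right (le_refl A.length)]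

lemma Matched.getD_true {w : List Bool} {i j : ℕ} (h : Matched w i j) :
    w.getD i false = true := by
  obtain ⟨A, B, C, _, hw, hA, hj⟩ := h
  subst hw hA
  exact getD_append_cons A true _ false

lemma Matched.getD_false {w : List Bool} {i j : ℕ} (h : Matched w i j) :
    w.getD j false = false := by
  obtain ⟨A, B, C, _, hw, hA, hj⟩ := h
  subst hw hA hj
  have hcast : A ++ true :: (B ++ false :: C) = (A ++ true :: B) ++ false :: C := by simp
  have hlen : A.length + B.length + 1 = (A ++ true :: B).length := by simp; omega
  rw [hcast, hlen]
  exact getD_append_cons _ false _ false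

lemma matched_unique_left {w : List Bool} {i j j' : ℕ}
    (h : Matched w i j) (h' : Matched w i j') : j = j' := by
  obtain ⟨A, B, C, hB, hw, hA, hj⟩ := h
  obtain ⟨A', B', C', hB', hw', hA', hj'⟩ := h'
  have hAA : A = A' := by
    have t1 : w.take i = A := by rw [hw, ← hA]; exact List.take_left ..
    have t2 : w.take i = A' := by rw [hw', ← hA']; exact List.take_left ..
    rw [t1] at t2; exact t2
  subst hAA
  have heq : B ++ false :: C = B' ++ false :: C' := by
    have h0 := hw.symm.trans hw'
    simpa using h0
  have key : ∀ (B B' C C' : List Bool), IsDyck B → IsDyck B' →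
      B ++ false :: C = B' ++ false :: C' → B.length < B'.length → False := by
    intro B B' C C' hB hB' heq hlt
    have hpref : B ++ [false] <+: B' ++ false :: C' := ⟨C, by simpa using heq⟩
    have hpref2 : B ++ [false] <+: B' :=
      List.prefix_of_prefix_length_le hpref (List.prefix_append _ _) (by simp; omega)
    have hc := hB'.2 _ hpref2
    simp [List.count_append] at hc
    have e1 := hB.1
    have e2 := hB'.1
    omega
  rcases lt_trichotomy B.length B'.length with hlt | heqlen | hgt
  · exact absurd (key B B' C C' hB hB' heq hlt) (by simp)
  · omega
  · exact absurd (key B' B C' C hB' hB heq.symm hgt) (by simp)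

lemma matched_unique_right {w : List Bool} {i j j' : ℕ}
    (h : Matched w j i) (h' : Matched w j' i) : j = j' := by
  obtain ⟨A, B, C, hB, hw, hA, hj⟩ := h
  obtain ⟨A', B', C', hB', hw', hA', hj'⟩ := h'
  have key : ∀ (A B C A' B' C' : List Bool), IsDyck B → IsDyck B' →
      A ++ true :: (B ++ false :: C) = A' ++ true :: (B' ++ false :: C') →
      A.length + B.length = A'.length + B'.length → A'.length < A.length → False := by
    intro A B C A' B' C' hB hB' heq hlen hlt
    have hdrop : (A' ++ true :: (B' ++ false :: C')).drop (A'.length + 1) =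
        B' ++ false :: C' := by
      rw [show A' ++ true :: (B' ++ false :: C') = (A' ++ [true]) ++ (B' ++ false :: C') by simp,
        show A'.length + 1 = (A' ++ [true]).length by simp]
      exact List.drop_left ..
    have hdrop2 : (A ++ true :: (B ++ false :: C)).drop (A'.length + 1) =
        A.drop (A'.length + 1) ++ true :: (B ++ false :: C) := by
      rw [List.drop_append]
      have : A'.length + 1 - A.length = 0 := by omega
      rw [this, List.drop_zero]
    set A₂ := A.drop (A'.length + 1) with hA₂
    have hA₂len : A₂.length = A.length - A'.length - 1 := by simp [hA₂]; omega
    have heq2 : B' ++ false :: C' = A₂ ++ true :: (B ++ false :: C) := by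
      rw [← hdrop, ← heq, hdrop2]
    have heq3 : B' ++ false :: C' = (A₂ ++ true :: B) ++ false :: C := by
      simpa using heq2
    have hBB : B' = A₂ ++ true :: B := by
      have hinj := List.append_inj heq3 ?_
      · exact hinj.1
      · simp; omega
    have hpref : A₂ <+: B' := ⟨true :: B, by rw [hBB]⟩
    have hc := hB'.2 _ hpref
    have hcnt1 : B'.count false = A₂.count false + B.count false := by
      rw [hBB]; simp [List.count_append]
    have hcnt2 : B'.count true = A₂.count true + B.count true + 1 := by
      rw [hBB]; simp [List.count_append]; omega
    have e1 := hB.1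
    have e2 := hB'.1
    omega
  rcases lt_trichotomy A.length A'.length with hlt | heqlen | hgt
  · exact absurd (key A' B' C' A B C hB' hB (hw'.symm.trans hw) (by omega) hlt) (by simp)
  · omega
  · exact absurd (key A B C A' B' C' hB hB' (hw.symm.trans hw') (by omega) hgt) (by simp)

lemma matchPair_unique {w : List Bool} {p j j' : ℕ}
    (h : MatchPair w p j) (h' : MatchPair w p j') : j = j' := by
  rcases h with h | h <;> rcases h' with h' | h'
  · exact matched_unique_left h h'
  · exact absurd (h.getD_true.symm.trans h'.getD_false) (by simp)
  · exact absurd (h'.getD_true.symm.trans h.getD_false) (by simp)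
  · exact matched_unique_right h h'

lemma MatchPair.symm {w : List Bool} {p j : ℕ} (h : MatchPair w p j) : MatchPair w j p :=
  h.elim Or.inr Or.inl

lemma MatchPair.ne {w : List Bool} {p j : ℕ} (h : MatchPair w p j) : p ≠ j := by
  rcases h with h | h
  · exact Nat.ne_of_lt h.lt
  · exact Nat.ne_of_gt h.lt

lemma MatchPair.lt_length {w : List Bool} {p j : ℕ} (h : MatchPair w p j) :
    p < w.length ∧ j < w.length := by
  rcases h with h | h
  · exact ⟨h.fst_lt_length, h.lt_length⟩
  · exact ⟨h.lt_length, h.fst_lt_length⟩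

end DyckAux

section DyckExist
open List

lemma first_return {w : List Bool} (hw : IsDyck w) (hne : w ≠ []) :
    ∃ B C : List Bool, IsDyck B ∧ IsDyck C ∧ w = true :: (B ++ false :: C) := by
  obtain ⟨c, t, rfl⟩ : ∃ c t, w = c :: t := by
    cases w with
    | nil => exact absurd rfl hne
    | cons c t => exact ⟨c, t, rfl⟩
  have hc : c = true := by
    have hp := hw.2 [c] ⟨t, rfl⟩
    cases c
    · simp at hp
    · rfl
  subst hc
  have hex : ∃ k, 0 < k ∧ k ≤ (true :: t).length ∧
      ((true :: t).take k).count false = ((true :: t).take k).count true :=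
    ⟨(true :: t).length, by simp, le_refl _, by rw [List.take_length]; exact hw.1⟩
  classical
  obtain ⟨hk0, hkL, hkbal⟩ := Nat.find_spec hex
  have hmin : ∀ m, m < Nat.find hex → ¬(0 < m ∧ m ≤ (true :: t).length ∧
      ((true :: t).take m).count false = ((true :: t).take m).count true) :=
    fun m hm => Nat.find_min hex hm
  obtain ⟨k, hk⟩ : ∃ k, k = Nat.find hex := ⟨_, rfl⟩
  rw [← hk] at hk0 hkL hkbal hmin
  have hk1 : k ≠ 1 := by
    intro h1
    rw [h1] at hkbal
    simp [List.take_succ] at hkbal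
  obtain ⟨j, rfl⟩ : ∃ j, k = j + 1 := ⟨k - 1, by omega⟩
  have hj1 : 1 ≤ j := by omega
  have hjt : j ≤ t.length := by simp at hkL; omega
  have htk : (true :: t).take (j+1) = true :: t.take j := by simp
  have hbal : (t.take j).count false = (t.take j).count true + 1 := by
    rw [htk] at hkbal
    simp [List.count_cons] at hkbal
    omega
  have hjm1 : j - 1 < t.length := by omega
  have htj : t.take j = t.take (j-1) ++ [t[j-1]] := by
    conv_lhs => rw [show j = (j-1) + 1 by omega]
    rw [List.take_succ]
    simp [List.getElem?_eq_getElem hjm1]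
  have hpre : ((true :: t).take j).count false ≤ ((true :: t).take j).count true :=
    hw.2 _ (List.take_prefix _ _)
  have hpre' : (t.take (j-1)).count false ≤ (t.take (j-1)).count true + 1 := by
    have hjj : (true :: t).take j = true :: t.take (j-1) := by
      conv_lhs => rw [show j = (j-1) + 1 by omega]
      simp
    rw [hjj] at hpre
    simp [List.count_cons] at hpre
    omega
  have hlet : t[j-1] = false := by
    by_contra hne'
    have hht : t[j-1] = true := by cases h : t[j-1] <;> simp_all
    rw [htj] at hbal
    simp [List.count_append, hht] at hbal
    omega
  have hbal2 : (t.take (j-1)).count false = (t.take (j-1)).count true := by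
    rw [htj, hlet] at hbal
    simp [List.count_append] at hbal
    omega
  have hsplit : t = t.take (j-1) ++ false :: t.drop j := by
    conv_lhs => rw [← List.take_append_drop j t]
    rw [htj, hlet]
    simp
  refine ⟨t.take (j-1), t.drop j, ⟨hbal2, ?_⟩, ⟨?_, ?_⟩, ?_⟩
  · -- prefix property of B
    intro p hp
    have hplen : p.length ≤ j - 1 := by
      have := hp.length_le
      simp at this
      omega
    have hp2 : p <+: t := hp.trans (List.take_prefix _ _)
    have hp3 : true :: p <+: true :: t := by
      obtain ⟨s, hs⟩ := hp2
      exact ⟨s, by simp [hs]⟩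
    have hcc := hw.2 _ hp3
    simp [List.count_cons] at hcc
    rcases Nat.lt_or_ge (p.count false) (p.count true + 1) with h | h
    · omega
    · exfalso
      have htake : true :: p = (true :: t).take (p.length + 1) := by
        have h5 := List.prefix_iff_eq_take.mp hp3
        simpa using h5
      have := hmin (p.length + 1) (by omega)
      apply this
      refine ⟨by omega, by simp; omega, ?_⟩
      rw [← htake]
      simp [List.count_cons]
      omega
  · -- balance of C
    have h1 := hw.1
    have h2 : t.count false = (t.take j).count false + (t.drop j).count false := by
      conv_lhs => rw [← List.take_append_drop j t]
      exact List.count_append ..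
    have h3 : t.count true = (t.take j).count true + (t.drop j).count true := by
      conv_lhs => rw [← List.take_append_drop j t]
      exact List.count_append ..
    simp [List.count_cons] at h1
    omega
  · -- prefix property of C
    intro p hp
    obtain ⟨s, hs⟩ := hp
    have hkey : (true :: t.take j) ++ p <+: true :: t := by
      refine ⟨s, ?_⟩
      simp only [List.cons_append, List.append_assoc]
      rw [hs]
      rw [List.take_append_drop]
    have hcc := hw.2 _ hkey
    simp [List.count_append, List.count_cons] at hcc
    omega
  · -- the decomposition
    rw [← hsplit]

lemma matched_append {B : List Bool} {x y : ℕ} (h : Matched B x y) (A C : List Bool) :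
    Matched (A ++ B ++ C) (A.length + x) (A.length + y) := by
  obtain ⟨A₁, B₁, C₁, hB₁, hBeq, hA₁, hy⟩ := h
  refine ⟨A ++ A₁, B₁, C₁ ++ C, hB₁, ?_, by simp [hA₁], by omega⟩
  rw [hBeq]
  simp

lemma matchPair_append {B : List Bool} {x y : ℕ} (h : MatchPair B x y) (A C : List Bool) :
    MatchPair (A ++ B ++ C) (A.length + x) (A.length + y) := by
  rcases h with h | h
  · exact Or.inl (matched_append h A C)
  · exact Or.inr (matched_append h A C)

lemma exists_matchPair : ∀ (L : ℕ) (w : List Bool), w.length = L → IsDyck w →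
    ∀ p < w.length, ∃ j, MatchPair w p j := by
  intro L
  induction L using Nat.strong_induction_on with
  | _ L IH =>
    intro w hL hw p hp
    have hne : w ≠ [] := by intro h; subst h; simp at hp
    obtain ⟨B, C, hB, hC, hdec⟩ := first_return hw hne
    have hlen : w.length = B.length + C.length + 2 := by rw [hdec]; simp; omega
    have hmatch0 : Matched w 0 (B.length + 1) :=
      ⟨[], B, C, hB, by simpa using hdec, rfl, by omega⟩
    rcases Nat.lt_or_ge p 1 with h0 | h1
    · exact ⟨B.length + 1, Or.inl (by rwa [show p = 0 by omega])⟩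
    rcases Nat.lt_or_ge p (B.length + 1) with hpB | hpB
    · -- p - 1 in B
      obtain ⟨y, hy⟩ := IH B.length (by omega) B rfl hB (p - 1) (by omega)
      have hlift := matchPair_append hy [true] (false :: C)
      have hw2 : [true] ++ B ++ (false :: C) = w := by rw [hdec]; simp
      rw [hw2] at hlift
      simp at hlift
      exact ⟨1 + y, by rwa [show p = 1 + (p-1) by omega]⟩
    rcases Nat.lt_or_ge p (B.length + 2) with hpB2 | hpB2
    · exact ⟨0, Or.inr (by rwa [show p = B.length + 1 by omega])⟩
    · -- p - (B.length + 2) in C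
      obtain ⟨y, hy⟩ := IH C.length (by omega) C rfl hC (p - (B.length + 2)) (by omega)
      have hlift := matchPair_append hy (true :: B ++ [false]) []
      have hw2 : (true :: B ++ [false]) ++ C ++ [] = w := by rw [hdec]; simp
      rw [hw2] at hlift
      have hlen2 : (true :: B ++ [false]).length = B.length + 2 := by simp
      rw [hlen2] at hlift
      exact ⟨B.length + 2 + y, by rwa [show p = B.length + 2 + (p - (B.length + 2)) by omega]⟩

end DyckExist

section DyckPr
open List

noncomputable def pr (w : List Bool) (p : ℕ) : ℕ :=
  if h : ∃ j, MatchPair w p j then h.choose else w.length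

lemma pr_eq {w : List Bool} {p j : ℕ} (h : MatchPair w p j) : pr w p = j := by
  have hex : ∃ j, MatchPair w p j := ⟨j, h⟩
  rw [pr, dif_pos hex]
  exact matchPair_unique hex.choose_spec h

lemma pr_spec {w : List Bool} (hw : IsDyck w) {p : ℕ} (hp : p < w.length) :
    MatchPair w p (pr w p) := by
  obtain ⟨j, hj⟩ := exists_matchPair w.length w rfl hw p hp
  rw [pr_eq hj]
  exact hj

lemma pr_pr {w : List Bool} (hw : IsDyck w) {p : ℕ} (hp : p < w.length) :
    pr w (pr w p) = p :=
  pr_eq (pr_spec hw hp).symm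

lemma pr_ne {w : List Bool} (hw : IsDyck w) {p : ℕ} (hp : p < w.length) :
    pr w p ≠ p :=
  fun h => (pr_spec hw hp).ne h.symm

lemma pr_lt_length {w : List Bool} (hw : IsDyck w) {p : ℕ} (hp : p < w.length) :
    pr w p < w.length :=
  (pr_spec hw hp).lt_length.2

lemma getD_true_iff {w : List Bool} (hw : IsDyck w) {p : ℕ} (hp : p < w.length) :
    w.getD p false = true ↔ p < pr w p := by
  rcases pr_spec hw hp with h | h
  · exact iff_of_true h.getD_true h.lt
  · exact iff_of_false (by rw [h.getD_false]; simp) (by have := h.lt; omega)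

lemma matched_of_lt_pr {w : List Bool} (hw : IsDyck w) {p : ℕ} (hp : p < w.length)
    (hlt : p < pr w p) : Matched w p (pr w p) := by
  rcases pr_spec hw hp with h | h
  · exact h
  · exact absurd h.lt (by omega)

/-- the interval (noncrossing) property -/
lemma pr_mem_Ioo {w : List Bool} (hw : IsDyck w) {i j p : ℕ}
    (hm : Matched w i j) (h1 : i < p) (h2 : p < j) : i < pr w p ∧ pr w p < j := by
  obtain ⟨A, B, C, hB, hweq, hA, hj⟩ := hm
  have hxB : p - i - 1 < B.length := by omega
  obtain ⟨y, hy⟩ := exists_matchPair B.length B rfl hB (p - i - 1) hxB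
  have hyB : y < B.length := (hy.lt_length).2
  have hlift := matchPair_append hy (A ++ [true]) (false :: C)
  have hw2 : (A ++ [true]) ++ B ++ (false :: C) = w := by rw [hweq]; simp
  rw [hw2] at hlift
  have hAl : (A ++ [true]).length = i + 1 := by simp [hA]
  rw [hAl] at hlift
  rw [show i + 1 + (p - i - 1) = p by omega] at hlift
  have := pr_eq hlift
  omega

end DyckPr

section DyckZig
open List

lemma zig0_eq (L p : ℕ) : zigR 0 L p = if p % 2 = 0 then p / 2 else L - (p+1)/2 := by
  simp [zigR]

def zigInv (L j : ℕ) : ℕ := if 2*j < L then 2*j else 2*(L - j) - 1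

lemma zig_lt {L p : ℕ} (hp : p < L) : zigR 0 L p < L := by
  rw [zig0_eq]
  split_ifs with h <;> omega

lemma zigInv_zig {L p : ℕ} (hp : p < L) : zigInv L (zigR 0 L p) = p := by
  rw [zig0_eq]
  split_ifs with h <;> rw [zigInv] <;> split_ifs with h2 <;> omega

lemma zig_zigInv {L j : ℕ} (hj : j < L) : zigR 0 L (zigInv L j) = j := by
  rw [zigInv]
  split_ifs with h <;> rw [zig0_eq] <;> split_ifs with h2 <;> omega

lemma zigInv_lt {L j : ℕ} (hj : j < L) : zigInv L j < L := by
  rw [zigInv]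
  split_ifs <;> omega

/-- description of the set of the first `k` read positions -/
lemma zig_mem_iff {L k j : ℕ} (hk : k ≤ L) (hj : j < L) :
    (∃ p, p < k ∧ zigR 0 L p = j) ↔ (j < (k+1)/2 ∨ L - k/2 ≤ j) := by
  constructor
  · rintro ⟨p, hp, rfl⟩
    rw [zig0_eq]
    split_ifs with h <;> omega
  · rintro (h | h)
    · refine ⟨2*j, by omega, ?_⟩
      rw [zig0_eq, if_pos (by omega)]
      omega
    · refine ⟨2*(L - j) - 1, by omega, ?_⟩
      rw [zig0_eq, if_neg (by omega)]
      omega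

end DyckZig

section DyckPsi
open List

/-- the `k`-th letter of `psi w` is a closer -/
def closer (w : List Bool) (k : ℕ) : Prop :=
  ∃ p' : ℕ, p' < k ∧ MatchPair w (zigR 0 w.length p') (zigR 0 w.length k)

lemma psi_length (w : List Bool) : (psi w).length = w.length := by
  simp [psi, psiR]

lemma psi_getD (w : List Bool) (k : ℕ) (hk : k < w.length) (d : Bool) :
    (psi w).getD k d = if closer w k then false else true := by
  have hlen : (psi w).length = w.length := psi_length w
  rw [List.getD_eq_getElem _ _ (by omega)]
  simp only [psi, psiR, List.getElem_ofFn, closer]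
  split_ifs with h <;> simp only [h, ↓reduceIte]

lemma count_take_eq (l : List Bool) (b : Bool) :
    ∀ k, k ≤ l.length →
    (l.take k).count b = ((Finset.range k).filter (fun i => l.getD i (!b) = b)).card := by
  intro k
  induction k with
  | zero => simp
  | succ k ih =>
    intro hk
    have hk' : k < l.length := by omega
    have h1 : l.take (k+1) = l.take k ++ [l[k]] := by
      rw [List.take_succ]
      simp [List.getElem?_eq_getElem hk']
    rw [h1, List.count_append, ih (by omega), Finset.range_add_one, Finset.filter_insert]
    have hgd : l.getD k (!b) = l[k] := List.getD_eq_getElem _ _ hk'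
    by_cases hc : l.getD k (!b) = b
    · rw [if_pos hc, Finset.card_insert_of_notMem (by simp)]
      have hx : l[k] = b := by rw [← hgd]; exact hc
      simp [hx]
    · rw [if_neg hc]
      have hx : l[k] ≠ b := by rw [← hgd]; exact hc
      cases b <;> cases hxx : l[k] <;> simp_all

lemma psi_take_count_false (w : List Bool) (k : ℕ) (hk : k ≤ w.length) :
    ((psi w).take k).count false
      = ((Finset.range k).filter (fun p => closer w p)).card := by
  rw [count_take_eq _ _ k (by rw [psi_length]; exact hk)]
  congr 1
  apply Finset.filter_congr
  intro i hi
  simp only [Finset.mem_range] at hi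
  rw [psi_getD w i (by omega)]
  by_cases h : closer w i <;> simp [h]

lemma psi_take_count_true (w : List Bool) (k : ℕ) (hk : k ≤ w.length) :
    ((psi w).take k).count true
      = ((Finset.range k).filter (fun p => ¬ closer w p)).card := by
  rw [count_take_eq _ _ k (by rw [psi_length]; exact hk)]
  congr 1
  apply Finset.filter_congr
  intro i hi
  simp only [Finset.mem_range] at hi
  rw [psi_getD w i (by omega)]
  by_cases h : closer w i <;> simp [h]

/-- the reading-time of the partner of the step read at time `p` -/
noncomputable def buddy (w : List Bool) (p : ℕ) : ℕ :=
  zigInv w.length (pr w (zigR 0 w.length p))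

lemma buddy_lt {w : List Bool} (hw : IsDyck w) {k : ℕ} (hk : k < w.length) :
    buddy w k < w.length :=
  zigInv_lt (pr_lt_length hw (zig_lt hk))

lemma buddy_buddy {w : List Bool} (hw : IsDyck w) {k : ℕ} (hk : k < w.length) :
    buddy w (buddy w k) = k := by
  have h1 : zigR 0 w.length (buddy w k) = pr w (zigR 0 w.length k) :=
    zig_zigInv (pr_lt_length hw (zig_lt hk))
  unfold buddy
  rw [zig_zigInv (pr_lt_length hw (zig_lt hk)), pr_pr hw (zig_lt hk), zigInv_zig hk]

lemma buddy_ne {w : List Bool} (hw : IsDyck w) {k : ℕ} (hk : k < w.length) :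
    buddy w k ≠ k := by
  intro h
  have h1 : zigR 0 w.length (buddy w k) = pr w (zigR 0 w.length k) :=
    zig_zigInv (pr_lt_length hw (zig_lt hk))
  rw [h] at h1
  exact pr_ne hw (zig_lt hk) h1.symm

lemma closer_iff_buddy {w : List Bool} (hw : IsDyck w) {k : ℕ} (hk : k < w.length) :
    closer w k ↔ buddy w k < k := by
  constructor
  · rintro ⟨p', hp', hm⟩
    have hpr : pr w (zigR 0 w.length k) = zigR 0 w.length p' := pr_eq hm.symm
    unfold buddy
    rw [hpr, zigInv_zig (by omega)]
    exact hp'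
  · intro h
    refine ⟨buddy w k, h, ?_⟩
    have h1 : zigR 0 w.length (buddy w k) = pr w (zigR 0 w.length k) :=
      zig_zigInv (pr_lt_length hw (zig_lt hk))
    rw [h1]
    exact (pr_spec hw (zig_lt hk)).symm

lemma card_closer_le {w : List Bool} (hw : IsDyck w) {k : ℕ} (hk : k ≤ w.length) :
    ((Finset.range k).filter (fun p => closer w p)).card
      ≤ ((Finset.range k).filter (fun p => ¬ closer w p)).card := by
  apply Finset.card_le_card_of_injOn (buddy w)
  · intro p hp
    simp only [Finset.mem_coe, Finset.mem_filter, Finset.mem_range] at hp ⊢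
    obtain ⟨hpk, hpc⟩ := hp
    have hpL : p < w.length := by omega
    have hb : buddy w p < p := (closer_iff_buddy hw hpL).mp hpc
    refine ⟨by omega, ?_⟩
    intro hcontra
    have := (closer_iff_buddy hw (by omega : buddy w p < w.length)).mp hcontra
    rw [buddy_buddy hw hpL] at this
    omega
  · intro p hp q hq hpq
    simp only [Finset.coe_filter, Set.mem_setOf_eq, Finset.mem_range] at hp hq
    have : buddy w (buddy w p) = buddy w (buddy w q) := by rw [hpq]
    rwa [buddy_buddy hw (by omega), buddy_buddy hw (by omega)] at this

lemma card_closer_eq {w : List Bool} (hw : IsDyck w) :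
    ((Finset.range w.length).filter (fun p => closer w p)).card
      = ((Finset.range w.length).filter (fun p => ¬ closer w p)).card := by
  apply le_antisymm (card_closer_le hw (le_refl _))
  apply Finset.card_le_card_of_injOn (buddy w)
  · intro p hp
    simp only [Finset.mem_coe, Finset.mem_filter, Finset.mem_range] at hp ⊢
    obtain ⟨hpk, hpc⟩ := hp
    have hb : ¬ buddy w p < p := fun h => hpc ((closer_iff_buddy hw hpk).mpr h)
    have hbne := buddy_ne hw hpk
    have hbL := buddy_lt hw hpk
    refine ⟨hbL, ?_⟩
    rw [closer_iff_buddy hw hbL, buddy_buddy hw hpk]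
    omega
  · intro p hp q hq hpq
    simp only [Finset.coe_filter, Set.mem_setOf_eq, Finset.mem_range] at hp hq
    have : buddy w (buddy w p) = buddy w (buddy w q) := by rw [hpq]
    rwa [buddy_buddy hw hp.1, buddy_buddy hw hq.1] at this

lemma psi_isDyck {w : List Bool} (hw : IsDyck w) : IsDyck (psi w) := by
  constructor
  · have h1 : psi w = (psi w).take w.length := by
      rw [← psi_length w, List.take_length]
    rw [h1, psi_take_count_false w _ (le_refl _), psi_take_count_true w _ (le_refl _)]
    exact card_closer_eq hw
  · intro p hp
    have hlen : p.length ≤ w.length := by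
      have := hp.length_le
      rwa [psi_length] at this
    have hpt : p = (psi w).take p.length := List.prefix_iff_eq_take.mp hp
    rw [hpt, psi_take_count_false w _ hlen, psi_take_count_true w _ hlen]
    exact card_closer_le hw hlen

end DyckPsi

section DyckState
open List

/-- number of open arcs from the left-read region into the middle after `k` reading steps -/
noncomputable def lft (w : List Bool) (k : ℕ) : ℕ :=
  ((Finset.range w.length).filter (fun p =>
    p < (k+1)/2 ∧ (k+1)/2 ≤ pr w p ∧ pr w p < w.length - k/2)).card

/-- number of open arcs from the right-read region into the middle after `k` reading steps -/
noncomputable def rgt (w : List Bool) (k : ℕ) : ℕ :=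
  ((Finset.range w.length).filter (fun q =>
    w.length - k/2 ≤ q ∧ (k+1)/2 ≤ pr w q ∧ pr w q < w.length - k/2)).card

lemma filter_card_congr {L : ℕ} {P Q : ℕ → Prop} [DecidablePred P] [DecidablePred Q] (h : ∀ x, x < L → (P x ↔ Q x)) :
    ((Finset.range L).filter P).card = ((Finset.range L).filter Q).card := by
  congr 1
  apply Finset.filter_congr
  intro x hx
  simp only [Finset.mem_range] at hx
  simp only [h x hx]

lemma filter_card_insert {L t : ℕ} {P Q : ℕ → Prop} [DecidablePred P] [DecidablePred Q] (ht : t < L) (hPt : P t) (hQt : ¬ Q t)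
    (h : ∀ x, x < L → x ≠ t → (P x ↔ Q x)) :
    ((Finset.range L).filter P).card = ((Finset.range L).filter Q).card + 1 := by
  have hset : (Finset.range L).filter P = insert t ((Finset.range L).filter Q) := by
    ext x
    simp only [Finset.mem_insert, Finset.mem_filter, Finset.mem_range]
    constructor
    · rintro ⟨hx, hPx⟩
      by_cases hxt : x = t
      · exact Or.inl hxt
      · exact Or.inr ⟨hx, (h x hx hxt).mp hPx⟩
    · rintro (rfl | ⟨hx, hQx⟩)
      · exact ⟨ht, hPt⟩
      · by_cases hxt : x = t
        · subst hxt; exact absurd hQx hQt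
        · exact ⟨hx, (h x hx hxt).mpr hQx⟩
  rw [hset, Finset.card_insert_of_notMem (by simp [hQt])]

lemma filter_card_zero {L : ℕ} {P : ℕ → Prop} [DecidablePred P] (h : ∀ x, x < L → ¬ P x) :
    ((Finset.range L).filter P).card = 0 := by
  rw [Finset.card_eq_zero, Finset.filter_eq_empty_iff]
  intro x hx
  exact h x (Finset.mem_range.mp hx)

lemma pr_eq_pr_arg {w : List Bool} (hw : IsDyck w) {p q : ℕ}
    (hp : p < w.length) (hq : q < w.length) : pr w p = q ↔ p = pr w q :=
  ⟨fun h => by rw [← pr_pr hw hp, h], fun h => by rw [h, pr_pr hw hq]⟩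

lemma getD_false_iff {w : List Bool} (hw : IsDyck w) {p : ℕ} (hp : p < w.length) :
    w.getD p false = false ↔ pr w p < p := by
  have h1 := getD_true_iff hw hp
  have h2 := pr_ne hw hp
  cases h : w.getD p false <;> rw [h] at h1 <;> simp at h1 ⊢ <;> omega

lemma cross1 {w : List Bool} (hw : IsDyck w) {p j : ℕ} (hpL : p < w.length)
    (hpj : p < j) (hjq : j < pr w p) :
    p < pr w j ∧ pr w j < pr w p := by
  have hm : Matched w p (pr w p) := matched_of_lt_pr hw hpL (by omega)
  exact pr_mem_Ioo hw hm hpj hjq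

lemma closer_iff_R {w : List Bool} (hw : IsDyck w) {k : ℕ} (hk : k < w.length) :
    closer w k ↔ (pr w (zigR 0 w.length k) < (k+1)/2 ∨
      w.length - k/2 ≤ pr w (zigR 0 w.length k)) := by
  have hjL := zig_lt hk
  have hmL := pr_lt_length hw hjL
  constructor
  · rintro ⟨p', hp', hm⟩
    have hz : zigR 0 w.length p' = pr w (zigR 0 w.length k) := (pr_eq hm.symm).symm
    exact (zig_mem_iff (le_of_lt hk) hmL).mp ⟨p', hp', hz⟩
  · intro h
    obtain ⟨p, hp, hzp⟩ := (zig_mem_iff (le_of_lt hk) hmL).mpr h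
    exact ⟨p, hp, by rw [hzp]; exact (pr_spec hw hjL).symm⟩

lemma lft_zero (w : List Bool) : lft w 0 = 0 := by
  unfold lft
  apply filter_card_zero
  intro x hx
  simp

lemma rgt_zero (w : List Bool) : rgt w 0 = 0 := by
  unfold rgt
  apply filter_card_zero
  intro x hx
  omega

end DyckState

section DyckStepEven
open List

lemma stepE_open {w : List Bool} (hw : IsDyck w) {k : ℕ} (hk : k < w.length)
    (he : k % 2 = 0) (hnc : ¬ closer w k) :
    w.getD (zigR 0 w.length k) false = true ∧
    lft w (k+1) = lft w k + 1 ∧ rgt w (k+1) = rgt w k := by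
  have hL2 : w.length % 2 = 0 := by obtain ⟨n, hn⟩ := hw.length_even; omega
  have hj : zigR 0 w.length k = k/2 := by rw [zig0_eq, if_pos he]
  have hzL := zig_lt hk
  have hmL := pr_lt_length hw hzL
  have hmne := pr_ne hw hzL
  have hcl := closer_iff_R hw hk
  have hprm := pr_pr hw hzL
  rw [hj] at hmL hmne hcl hprm
  rw [hcl] at hnc
  push_neg at hnc
  obtain ⟨hge, hlt⟩ := hnc
  refine ⟨?_, ?_, ?_⟩
  · have hlet := getD_true_iff hw hzL
    rw [hj] at hlet ⊢
    rw [hlet]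
    omega
  · unfold lft
    apply filter_card_insert (t := k/2) (by omega)
    · have hprj : pr w (k/2) = pr w (k/2) := rfl
      refine ⟨by omega, by omega, by omega⟩
    · intro hc
      omega
    · intro x hx hxt
      have hiffx := pr_eq_pr_arg hw hx hzL
      rw [hj] at hiffx
      have hx2 : x = k/2 → pr w x = pr w (k/2) := fun h => by rw [h]
      omega
  · unfold rgt
    apply filter_card_congr
    intro x hx
    have hiffx := pr_eq_pr_arg hw hx hzL
    rw [hj] at hiffx
    have hx2 : x = k/2 → pr w x = pr w (k/2) := fun h => by rw [h]
    omega

end DyckStepEven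

section DyckStepRest
open List

lemma stepE_close_pos {w : List Bool} (hw : IsDyck w) {k : ℕ} (hk : k < w.length)
    (he : k % 2 = 0) (hc : closer w k) (h0 : lft w k ≠ 0) :
    w.getD (zigR 0 w.length k) false = false ∧
    lft w k = lft w (k+1) + 1 ∧ rgt w (k+1) = rgt w k := by
  have hL2 : w.length % 2 = 0 := by obtain ⟨n, hn⟩ := hw.length_even; omega
  have hj : zigR 0 w.length k = k/2 := by rw [zig0_eq, if_pos he]
  have hzL := zig_lt hk
  have hmL := pr_lt_length hw hzL
  have hmne := pr_ne hw hzL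
  have hcl := closer_iff_R hw hk
  have hprm := pr_pr hw hzL
  rw [hj] at hmL hmne hcl hprm
  rw [hcl] at hc
  unfold lft at h0
  obtain ⟨p₀, hp₀⟩ := Finset.card_ne_zero.mp h0
  simp only [Finset.mem_filter, Finset.mem_range] at hp₀
  obtain ⟨hp₀L, hp₀a, hp₀1, hp₀2⟩ := hp₀
  have hma : pr w (k/2) < k/2 := by
    rcases hc with h | h
    · omega
    · exfalso
      have hiffp := pr_eq_pr_arg hw hp₀L hzL
      rw [hj] at hiffp
      have hne0 : k/2 < pr w p₀ := by omega
      have hcr := cross1 hw hp₀L (by omega : p₀ < k/2) hne0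
      omega
  refine ⟨?_, ?_, ?_⟩
  · have hlet := getD_false_iff hw hzL
    rw [hj] at hlet ⊢
    rw [hlet]
    omega
  · unfold lft
    apply filter_card_insert (t := pr w (k/2)) (by omega)
    · refine ⟨by omega, by omega, by omega⟩
    · intro hcont
      omega
    · intro x hx hxt
      have hiffx := pr_eq_pr_arg hw hx hzL
      rw [hj] at hiffx
      have hx2 : x = k/2 → pr w x = pr w (k/2) := fun h => by rw [h]
      omega
  · unfold rgt
    apply filter_card_congr
    intro x hx
    have hiffx := pr_eq_pr_arg hw hx hzL
    rw [hj] at hiffx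
    have hx2 : x = k/2 → pr w x = pr w (k/2) := fun h => by rw [h]
    omega

lemma stepE_close_zero {w : List Bool} (hw : IsDyck w) {k : ℕ} (hk : k < w.length)
    (he : k % 2 = 0) (hc : closer w k) (h0 : lft w k = 0) :
    w.getD (zigR 0 w.length k) false = true ∧
    lft w (k+1) = 0 ∧ rgt w k = rgt w (k+1) + 1 := by
  have hL2 : w.length % 2 = 0 := by obtain ⟨n, hn⟩ := hw.length_even; omega
  have hj : zigR 0 w.length k = k/2 := by rw [zig0_eq, if_pos he]
  have hzL := zig_lt hk
  have hmL := pr_lt_length hw hzL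
  have hmne := pr_ne hw hzL
  have hcl := closer_iff_R hw hk
  have hprm := pr_pr hw hzL
  rw [hj] at hmL hmne hcl hprm
  rw [hcl] at hc
  unfold lft at h0
  rw [Finset.card_eq_zero, Finset.filter_eq_empty_iff] at h0
  have hma : w.length - k/2 ≤ pr w (k/2) := by
    rcases hc with h | h
    · exfalso
      have := h0 (Finset.mem_range.mpr hmL)
      omega
    · exact h
  refine ⟨?_, ?_, ?_⟩
  · have hlet := getD_true_iff hw hzL
    rw [hj] at hlet ⊢
    rw [hlet]
    omega
  · unfold lft
    apply filter_card_zero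
    intro x hx
    have hempx := h0 (Finset.mem_range.mpr hx)
    have hiffx := pr_eq_pr_arg hw hx hzL
    rw [hj] at hiffx
    have hx2 : x = k/2 → pr w x = pr w (k/2) := fun h => by rw [h]
    omega
  · unfold rgt
    apply filter_card_insert (t := pr w (k/2)) (by omega)
    · refine ⟨by omega, by omega, by omega⟩
    · intro hcont
      omega
    · intro x hx hxt
      have hiffx := pr_eq_pr_arg hw hx hzL
      rw [hj] at hiffx
      have hx2 : x = k/2 → pr w x = pr w (k/2) := fun h => by rw [h]
      omega

lemma stepO_open {w : List Bool} (hw : IsDyck w) {k : ℕ} (hk : k < w.length)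
    (he : k % 2 = 1) (hnc : ¬ closer w k) :
    w.getD (zigR 0 w.length k) false = false ∧
    lft w (k+1) = lft w k ∧ rgt w (k+1) = rgt w k + 1 := by
  have hL2 : w.length % 2 = 0 := by obtain ⟨n, hn⟩ := hw.length_even; omega
  have hj : zigR 0 w.length k = w.length - (k+1)/2 := by rw [zig0_eq, if_neg (by omega)]
  have hzL := zig_lt hk
  have hmL := pr_lt_length hw hzL
  have hmne := pr_ne hw hzL
  have hcl := closer_iff_R hw hk
  have hprm := pr_pr hw hzL
  rw [hj] at hmL hmne hcl hprm
  rw [hcl] at hnc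
  push_neg at hnc
  obtain ⟨hge, hlt⟩ := hnc
  refine ⟨?_, ?_, ?_⟩
  · have hlet := getD_false_iff hw hzL
    rw [hj] at hlet ⊢
    rw [hlet]
    omega
  · unfold lft
    apply filter_card_congr
    intro x hx
    have hiffx := pr_eq_pr_arg hw hx hzL
    rw [hj] at hiffx
    have hx2 : x = w.length - (k+1)/2 → pr w x = pr w (w.length - (k+1)/2) := fun h => by rw [h]
    omega
  · unfold rgt
    apply filter_card_insert (t := w.length - (k+1)/2) (by omega)
    · refine ⟨by omega, by omega, by omega⟩
    · intro hcont
      omega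
    · intro x hx hxt
      have hiffx := pr_eq_pr_arg hw hx hzL
      rw [hj] at hiffx
      have hx2 : x = w.length - (k+1)/2 → pr w x = pr w (w.length - (k+1)/2) := fun h => by rw [h]
      omega

lemma stepO_close_pos {w : List Bool} (hw : IsDyck w) {k : ℕ} (hk : k < w.length)
    (he : k % 2 = 1) (hc : closer w k) (h0 : rgt w k ≠ 0) :
    w.getD (zigR 0 w.length k) false = true ∧
    lft w (k+1) = lft w k ∧ rgt w k = rgt w (k+1) + 1 := by
  have hL2 : w.length % 2 = 0 := by obtain ⟨n, hn⟩ := hw.length_even; omega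
  have hj : zigR 0 w.length k = w.length - (k+1)/2 := by rw [zig0_eq, if_neg (by omega)]
  have hzL := zig_lt hk
  have hmL := pr_lt_length hw hzL
  have hmne := pr_ne hw hzL
  have hcl := closer_iff_R hw hk
  have hprm := pr_pr hw hzL
  rw [hj] at hmL hmne hcl hprm
  rw [hcl] at hc
  unfold rgt at h0
  obtain ⟨q₀, hq₀⟩ := Finset.card_ne_zero.mp h0
  simp only [Finset.mem_filter, Finset.mem_range] at hq₀
  obtain ⟨hq₀L, hq₀b, hq₀1, hq₀2⟩ := hq₀
  have hma : w.length - k/2 ≤ pr w (w.length - (k+1)/2) := by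
    rcases hc with h | h
    · exfalso
      have hiffq := pr_eq_pr_arg hw hq₀L hzL
      rw [hj] at hiffq
      have hprq₀L : pr w q₀ < w.length := pr_lt_length hw hq₀L
      have hprq : pr w (pr w q₀) = q₀ := pr_pr hw hq₀L
      have hp1 : pr w q₀ < w.length - (k+1)/2 := by omega
      have hp2 : w.length - (k+1)/2 < pr w (pr w q₀) := by omega
      have hcr := cross1 hw hprq₀L hp1 hp2
      omega
    · exact h
  refine ⟨?_, ?_, ?_⟩
  · have hlet := getD_true_iff hw hzL
    rw [hj] at hlet ⊢
    rw [hlet]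
    omega
  · unfold lft
    apply filter_card_congr
    intro x hx
    have hiffx := pr_eq_pr_arg hw hx hzL
    rw [hj] at hiffx
    have hx2 : x = w.length - (k+1)/2 → pr w x = pr w (w.length - (k+1)/2) := fun h => by rw [h]
    omega
  · unfold rgt
    apply filter_card_insert (t := pr w (w.length - (k+1)/2)) (by omega)
    · refine ⟨by omega, by omega, by omega⟩
    · intro hcont
      omega
    · intro x hx hxt
      have hiffx := pr_eq_pr_arg hw hx hzL
      rw [hj] at hiffx
      have hx2 : x = w.length - (k+1)/2 → pr w x = pr w (w.length - (k+1)/2) := fun h => by rw [h]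
      omega

lemma stepO_close_zero {w : List Bool} (hw : IsDyck w) {k : ℕ} (hk : k < w.length)
    (he : k % 2 = 1) (hc : closer w k) (h0 : rgt w k = 0) :
    w.getD (zigR 0 w.length k) false = false ∧
    lft w k = lft w (k+1) + 1 ∧ rgt w (k+1) = 0 := by
  have hL2 : w.length % 2 = 0 := by obtain ⟨n, hn⟩ := hw.length_even; omega
  have hj : zigR 0 w.length k = w.length - (k+1)/2 := by rw [zig0_eq, if_neg (by omega)]
  have hzL := zig_lt hk
  have hmL := pr_lt_length hw hzL
  have hmne := pr_ne hw hzL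
  have hcl := closer_iff_R hw hk
  have hprm := pr_pr hw hzL
  rw [hj] at hmL hmne hcl hprm
  rw [hcl] at hc
  unfold rgt at h0
  rw [Finset.card_eq_zero, Finset.filter_eq_empty_iff] at h0
  have hma : pr w (w.length - (k+1)/2) < (k+1)/2 := by
    rcases hc with h | h
    · exact h
    · exfalso
      have := h0 (Finset.mem_range.mpr hmL)
      omega
  refine ⟨?_, ?_, ?_⟩
  · have hlet := getD_false_iff hw hzL
    rw [hj] at hlet ⊢
    rw [hlet]
    omega
  · unfold lft
    apply filter_card_insert (t := pr w (w.length - (k+1)/2)) (by omega)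
    · refine ⟨by omega, by omega, by omega⟩
    · intro hcont
      omega
    · intro x hx hxt
      have hiffx := pr_eq_pr_arg hw hx hzL
      rw [hj] at hiffx
      have hx2 : x = w.length - (k+1)/2 → pr w x = pr w (w.length - (k+1)/2) := fun h => by rw [h]
      omega
  · unfold rgt
    apply filter_card_zero
    intro x hx
    have hempx := h0 (Finset.mem_range.mpr hx)
    have hiffx := pr_eq_pr_arg hw hx hzL
    rw [hj] at hiffx
    have hx2 : x = w.length - (k+1)/2 → pr w x = pr w (w.length - (k+1)/2) := fun h => by rw [h]
    omega

end DyckStepRest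

section DyckInj
open List

lemma closer_congr {w w' : List Bool} (hpsi : psi w = psi w') (hlen : w.length = w'.length)
    {k : ℕ} (hk : k < w.length) : closer w k ↔ closer w' k := by
  have h1 := psi_getD w k hk true
  have h2 := psi_getD w' k (by omega) true
  rw [hpsi] at h1
  rw [h1] at h2
  by_cases hc : closer w k <;> by_cases hc' : closer w' k <;>
    simp [hc, hc'] at h2 ⊢

lemma psi_inj_aux {w w' : List Bool} (hw : IsDyck w) (hw' : IsDyck w')
    (hlen : w.length = w'.length) (hpsi : psi w = psi w') :
    ∀ k, k ≤ w.length → lft w k = lft w' k ∧ rgt w k = rgt w' k ∧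
      ∀ p, p < k → w.getD (zigR 0 w.length p) false = w'.getD (zigR 0 w'.length p) false := by
  intro k
  induction k with
  | zero =>
    exact fun _ => ⟨by rw [lft_zero, lft_zero], by rw [rgt_zero, rgt_zero],
      fun p hp => absurd hp (by omega)⟩
  | succ k ih =>
    intro hk1
    have hkL : k < w.length := by omega
    have hkL' : k < w'.length := by omega
    obtain ⟨hl, hr, hp⟩ := ih (by omega)
    have hcc : closer w k ↔ closer w' k := closer_congr hpsi hlen hkL
    have hfin : ∀ vk vk' : Bool, w.getD (zigR 0 w.length k) false = vk →
        w'.getD (zigR 0 w'.length k) false = vk' → vk = vk' →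
        ∀ p, p < k + 1 → w.getD (zigR 0 w.length p) false
          = w'.getD (zigR 0 w'.length p) false := by
      intro vk vk' g1 g1' hv p hpk
      rcases Nat.lt_or_ge p k with h | h
      · exact hp p h
      · have hpe : p = k := by omega
        subst hpe
        rw [g1, g1', hv]
    by_cases hpar : k % 2 = 0
    · by_cases hc : closer w k
      · by_cases h0 : lft w k = 0
        · obtain ⟨g1, g2, g3⟩ := stepE_close_zero hw hkL hpar hc h0
          obtain ⟨g1', g2', g3'⟩ := stepE_close_zero hw' hkL' hpar (hcc.mp hc)
            (by rw [← hl]; exact h0)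
          exact ⟨by omega, by omega, hfin _ _ g1 g1' rfl⟩
        · obtain ⟨g1, g2, g3⟩ := stepE_close_pos hw hkL hpar hc h0
          obtain ⟨g1', g2', g3'⟩ := stepE_close_pos hw' hkL' hpar (hcc.mp hc)
            (by rw [← hl]; exact h0)
          exact ⟨by omega, by omega, hfin _ _ g1 g1' rfl⟩
      · obtain ⟨g1, g2, g3⟩ := stepE_open hw hkL hpar hc
        obtain ⟨g1', g2', g3'⟩ := stepE_open hw' hkL' hpar (fun h => hc (hcc.mpr h))
        exact ⟨by omega, by omega, hfin _ _ g1 g1' rfl⟩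
    · have hpar1 : k % 2 = 1 := by omega
      by_cases hc : closer w k
      · by_cases h0 : rgt w k = 0
        · obtain ⟨g1, g2, g3⟩ := stepO_close_zero hw hkL hpar1 hc h0
          obtain ⟨g1', g2', g3'⟩ := stepO_close_zero hw' hkL' hpar1 (hcc.mp hc)
            (by rw [← hr]; exact h0)
          exact ⟨by omega, by omega, hfin _ _ g1 g1' rfl⟩
        · obtain ⟨g1, g2, g3⟩ := stepO_close_pos hw hkL hpar1 hc h0
          obtain ⟨g1', g2', g3'⟩ := stepO_close_pos hw' hkL' hpar1 (hcc.mp hc)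
            (by rw [← hr]; exact h0)
          exact ⟨by omega, by omega, hfin _ _ g1 g1' rfl⟩
      · obtain ⟨g1, g2, g3⟩ := stepO_open hw hkL hpar1 hc
        obtain ⟨g1', g2', g3'⟩ := stepO_open hw' hkL' hpar1 (fun h => hc (hcc.mpr h))
        exact ⟨by omega, by omega, hfin _ _ g1 g1' rfl⟩

lemma psi_inj {w w' : List Bool} (hw : IsDyck w) (hw' : IsDyck w')
    (hpsi : psi w = psi w') : w = w' := by
  have hlen : w.length = w'.length := by
    rw [← psi_length w, ← psi_length w', hpsi]
  obtain ⟨-, -, hletters⟩ := psi_inj_aux hw hw' hlen hpsi w.length (le_refl _)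
  apply List.ext_getElem hlen
  intro i h1 h2
  have hzi : zigR 0 w.length (zigInv w.length i) = i := zig_zigInv h1
  have hlt : zigInv w.length i < w.length := zigInv_lt h1
  have hmain := hletters (zigInv w.length i) hlt
  rw [← hlen] at hmain
  rw [hzi] at hmain
  rw [List.getD_eq_getElem _ _ h1, List.getD_eq_getElem _ _ h2] at hmain
  exact hmain

end DyckInj
/-- `Ψ` is a bijection from `D_n` to itself, for every `n ≥ 0`. -/
theorem psi_bijOn (n : ℕ) :
    Set.BijOn psi {w : List Bool | IsDyck w ∧ w.length = 2 * n}
      {w : List Bool | IsDyck w ∧ w.length = 2 * n} := by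
  have hfin : Set.Finite {w : List Bool | IsDyck w ∧ w.length = 2 * n} :=
    Set.Finite.subset (List.finite_length_eq Bool (2*n)) (fun w hw => hw.2)
  have hmaps : Set.MapsTo psi {w : List Bool | IsDyck w ∧ w.length = 2 * n}
      {w : List Bool | IsDyck w ∧ w.length = 2 * n} := by
    intro w hw
    exact ⟨psi_isDyck hw.1, by rw [psi_length]; exact hw.2⟩
  have hinj : Set.InjOn psi {w : List Bool | IsDyck w ∧ w.length = 2 * n} :=
    fun w hw w' hw' h => psi_inj hw.1 hw'.1 h
  exact (Set.Finite.injOn_iff_bijOn_of_mapsTo hfin hmaps).mp hinj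

end DyckBij
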